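/- For all integers n ≥ 0 and all natural numbers m, d with m ≤ d, the number of pairs (c, E), where c : Fin n → Bool is a choice with exactly d indices k satisfying c k = false and E is a noncrossing contraction with exactly m edges of the word of (a + a†)^n associated to c, equals the number of 2-Motzkin paths of length n with exactly m up steps U and exactly d − m gray level steps L'. -/

import Mathlib

/-- Two edges `(i,j)` and `(p,q)` cross if `i < p < j < q` or `p < i < q < j`. -/
def Crosses {N : ℕ} (e f : Fin N × Fin N) : Prop :=
  (e.1 < f.1 ∧ f.1 < e.2 ∧ e.2 < f.2) ∨ (f.1 < e.1 ∧ e.1 < f.2 ∧ f.2 < e.2)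

/-- A contraction of the word `w`: a set of edges `(i,j)` with `i < j`, `w i = false` (an `a`),
`w j = true` (an `a†`), whose endpoints are pairwise distinct. -/
def IsContraction {N : ℕ} (w : Fin N → Bool) (E : Finset (Fin N × Fin N)) : Prop :=
  (∀ e ∈ E, e.1 < e.2 ∧ w e.1 = false ∧ w e.2 = true) ∧
  (∀ e ∈ E, ∀ f ∈ E, e ≠ f → e.1 ≠ f.1 ∧ e.1 ≠ f.2 ∧ e.2 ≠ f.1 ∧ e.2 ≠ f.2)

/-- A set of edges is noncrossing if no two of its edges cross. -/
def IsNoncrossing {N : ℕ} (E : Finset (Fin N × Fin N)) : Prop :=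
  ∀ e ∈ E, ∀ f ∈ E, ¬ Crosses e f

/-- The number of noncrossing contractions of `w` with exactly `m` edges. -/
noncomputable def ncCount {N : ℕ} (w : Fin N → Bool) (m : ℕ) : ℕ :=
  Nat.card {E : Finset (Fin N × Fin N) //
    IsContraction w E ∧ IsNoncrossing E ∧ E.card = m}

/-- The number of pairs `(c, E)` where `c : Fin n → Bool` is a choice for `(a + a†)^n` (the
associated word has letter `a` at position `k` if `c k = false` and `a†` otherwise) with
exactly `i` indices `k` satisfying `c k = false`, and `E` is a noncrossing contraction of the
associated word with exactly `j` edges. -/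
noncomputable def pairCountAA (n j i : ℕ) : ℕ :=
  Nat.card {p : (Fin n → Bool) × Finset (Fin n × Fin n) //
    (Finset.univ.filter (fun k => p.1 k = false)).card = i ∧
    IsContraction p.1 p.2 ∧ IsNoncrossing p.2 ∧ p.2.card = j}

/-- Steps of a 2-Motzkin path: up, down, black level, gray level. -/
inductive MStep : Type
  | U : MStep
  | D : MStep
  | Lb : MStep
  | Lg : MStep
deriving DecidableEq

/-- Height change of a step: `U` is `+1`, `D` is `-1`, level steps are `0`. -/
def MStep.h : MStep → ℤ
  | .U => 1
  | .D => -1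
  | .Lb => 0
  | .Lg => 0

/-- A 2-Motzkin path: every partial height is nonnegative and the final height is `0`. -/
def IsMotzkin2 (p : List MStep) : Prop :=
  (∀ q : List MStep, q <+: p → 0 ≤ (q.map MStep.h).sum) ∧ (p.map MStep.h).sum = 0

namespace Stmt16
open Finset

variable {n : ℕ}

lemma h_le_one (s : MStep) : s.h ≤ 1 := by cases s <;> simp [MStep.h]
lemma neg_one_le_h (s : MStep) : -1 ≤ s.h := by cases s <;> simp [MStep.h]
lemma h_pos_iff (s : MStep) : 0 < s.h ↔ s = .U := by cases s <;> simp [MStep.h]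
lemma h_neg_iff (s : MStep) : s.h < 0 ↔ s = .D := by cases s <;> simp [MStep.h]

/-- height after the first `t` steps -/
def ht (f : Fin n → MStep) (t : ℕ) : ℤ :=
  ∑ k ∈ Finset.univ.filter (fun k : Fin n => (k : ℕ) < t), (f k).h

lemma ht_zero (f : Fin n → MStep) : ht f 0 = 0 := by simp [ht]

lemma ht_succ (f : Fin n → MStep) (t : ℕ) (h : t < n) :
    ht f (t + 1) = ht f t + (f ⟨t, h⟩).h := by
  unfold ht
  have : (Finset.univ.filter fun k : Fin n => (k : ℕ) < t + 1)
      = insert ⟨t, h⟩ (Finset.univ.filter fun k : Fin n => (k : ℕ) < t) := by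
    ext k
    simp [Nat.lt_succ_iff_lt_or_eq, Fin.ext_iff, or_comm]
    omega
  rw [this, Finset.sum_insert (by simp)]
  ring

/-- the step at position `k` determined by a pair `(c, E)` -/
def stepOf (c : Fin n → Bool) (E : Finset (Fin n × Fin n)) (k : Fin n) : MStep :=
  if k ∈ E.image Prod.fst then .U else if k ∈ E.image Prod.snd then .D
  else if c k then .Lb else .Lg

/-- edges spanning the gap before position `t` -/
def span (E : Finset (Fin n × Fin n)) (t : ℕ) : Finset (Fin n × Fin n) :=
  E.filter (fun e => (e.1 : ℕ) < t ∧ t ≤ (e.2 : ℕ))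

variable {c : Fin n → Bool} {E : Finset (Fin n × Fin n)}

lemma fst_injOn (hC : IsContraction c E) :
    Set.InjOn Prod.fst (E : Set (Fin n × Fin n)) := by
  intro e he f hf hef
  by_contra hne
  exact (hC.2 e (Finset.mem_coe.mp he) f (Finset.mem_coe.mp hf) hne).1 hef

lemma snd_injOn (hC : IsContraction c E) :
    Set.InjOn Prod.snd (E : Set (Fin n × Fin n)) := by
  intro e he f hf hef
  by_contra hne
  exact (hC.2 e (Finset.mem_coe.mp he) f (Finset.mem_coe.mp hf) hne).2.2.2 hef

lemma not_mem_both (hC : IsContraction c E) (k : Fin n) :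
    ¬ (k ∈ E.image Prod.fst ∧ k ∈ E.image Prod.snd) := by
  rintro ⟨h1, h2⟩
  obtain ⟨e, he, he1⟩ := Finset.mem_image.mp h1
  obtain ⟨f, hf, hf2⟩ := Finset.mem_image.mp h2
  by_cases hef : e = f
  · subst hef
    have := (hC.1 e he).1
    rw [he1, hf2] at this
    exact lt_irrefl _ this
  · exact (hC.2 e he f hf hef).2.1 (he1.trans hf2.symm)

lemma h_stepOf (hC : IsContraction c E) (k : Fin n) :
    (stepOf c E k).h
      = (if k ∈ E.image Prod.fst then (1 : ℤ) else 0)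
        - (if k ∈ E.image Prod.snd then (1 : ℤ) else 0) := by
  unfold stepOf
  by_cases h1 : k ∈ E.image Prod.fst
  · have h2 : k ∉ E.image Prod.snd := fun h2 => not_mem_both hC k ⟨h1, h2⟩
    simp [h1, h2, MStep.h]
  · by_cases h2 : k ∈ E.image Prod.snd
    · simp [h1, h2, MStep.h]
    · by_cases h3 : c k <;> simp [h1, h2, h3, MStep.h]

lemma card_image_fst_lt (hC : IsContraction c E) (t : ℕ) :
    ((E.image Prod.fst).filter (fun k : Fin n => (k : ℕ) < t)).card
      = (E.filter (fun e => ((e.1 : ℕ) < t))).card := by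
  rw [Finset.filter_image]
  exact Finset.card_image_of_injOn ((fst_injOn hC).mono (by
    intro x hx; exact Finset.mem_coe.mpr (Finset.mem_of_mem_filter x (Finset.mem_coe.mp hx))))

lemma card_image_snd_lt (hC : IsContraction c E) (t : ℕ) :
    ((E.image Prod.snd).filter (fun k : Fin n => (k : ℕ) < t)).card
      = (E.filter (fun e => ((e.2 : ℕ) < t))).card := by
  rw [Finset.filter_image]
  exact Finset.card_image_of_injOn ((snd_injOn hC).mono (by
    intro x hx; exact Finset.mem_coe.mpr (Finset.mem_of_mem_filter x (Finset.mem_coe.mp hx))))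

lemma ht_stepOf (hC : IsContraction c E) (t : ℕ) :
    ht (stepOf c E) t = (span E t).card := by
  have hsub : E.filter (fun e => ((e.2 : ℕ) < t)) ⊆ E.filter (fun e => ((e.1 : ℕ) < t)) := by
    intro e he
    rw [Finset.mem_filter] at he ⊢
    exact ⟨he.1, lt_trans (show ((e.1:ℕ) < (e.2:ℕ)) from (hC.1 e he.1).1) he.2⟩
  have hspan : span E t = E.filter (fun e => ((e.1 : ℕ) < t)) \ E.filter (fun e => ((e.2 : ℕ) < t)) := by
    ext e
    simp only [span, Finset.mem_filter, Finset.mem_sdiff]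
    constructor
    · rintro ⟨he, h1, h2⟩; exact ⟨⟨he, h1⟩, fun hx => by omega⟩
    · rintro ⟨⟨he, h1⟩, h2⟩
      refine ⟨he, h1, ?_⟩
      by_contra hlt
      exact h2 ⟨he, by omega⟩
  rw [hspan, Finset.card_sdiff_of_subset hsub]
  unfold ht
  rw [Finset.sum_congr rfl (fun k _ => h_stepOf hC k), Finset.sum_sub_distrib]
  have e1 : ∀ (S : Finset (Fin n)),
      (∑ k ∈ Finset.univ.filter (fun k : Fin n => (k:ℕ) < t), if k ∈ S then (1:ℤ) else 0)
        = (S.filter (fun k : Fin n => (k:ℕ) < t)).card := by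
    intro S
    rw [Finset.sum_boole]
    have : (Finset.univ.filter (fun k : Fin n => (k:ℕ) < t)).filter (fun k => k ∈ S)
        = S.filter (fun k : Fin n => (k:ℕ) < t) := by
      ext k
      simp only [Finset.mem_filter, Finset.mem_univ, true_and]
      tauto
    rw [this]
  rw [e1, e1, card_image_fst_lt hC, card_image_snd_lt hC,
    Nat.cast_sub (Finset.card_le_card hsub)]

/-- reconstructed word from a path -/
def crec (f : Fin n → MStep) (k : Fin n) : Bool :=
  match f k with
  | .D => true
  | .Lb => true
  | _ => false

/-- reconstructed contraction from a path -/
def erec (f : Fin n → MStep) : Finset (Fin n × Fin n) :=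
  Finset.univ.filter (fun e : Fin n × Fin n =>
    f e.1 = .U ∧ f e.2 = .D ∧ e.1 < e.2 ∧ ht f (e.1 : ℕ) = ht f ((e.2 : ℕ) + 1) ∧
    ∀ k : Fin n, e.1 < k → k ≤ e.2 → ht f (e.1 : ℕ) < ht f (k : ℕ))

lemma mem_erec {f : Fin n → MStep} {e : Fin n × Fin n} :
    e ∈ erec f ↔ f e.1 = .U ∧ f e.2 = .D ∧ e.1 < e.2 ∧
      ht f (e.1 : ℕ) = ht f ((e.2 : ℕ) + 1) ∧
      ∀ k : Fin n, e.1 < k → k ≤ e.2 → ht f (e.1 : ℕ) < ht f (k : ℕ) := by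
  simp [erec]

/-- at most one left endpoint per right endpoint in `erec` -/
lemma erec_right_unique {f : Fin n → MStep} {i i' j : Fin n}
    (h1 : (i, j) ∈ erec f) (h2 : (i', j) ∈ erec f) : i = i' := by
  rw [mem_erec] at h1 h2
  rcases lt_trichotomy i i' with h | h | h
  · exfalso
    have := h1.2.2.2.2 i' h h2.2.2.1.le
    rw [h1.2.2.2.1, ← h2.2.2.2.1] at this
    exact lt_irrefl _ this
  · exact h
  · exfalso
    have := h2.2.2.2.2 i h h1.2.2.1.le
    rw [h2.2.2.2.1, ← h1.2.2.2.1] at this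
    exact lt_irrefl _ this

lemma erec_contraction (f : Fin n → MStep) : IsContraction (crec f) (erec f) := by
  constructor
  · intro e he
    rw [mem_erec] at he
    refine ⟨he.2.2.1, ?_, ?_⟩
    · unfold crec; rw [he.1]
    · unfold crec; rw [he.2.1]
  · intro e he g hg hne
    have he0 := he; have hg0 := hg
    rw [mem_erec] at he hg
    have hUD : ∀ a b : Fin n, f a = .U → f b = .D → a ≠ b := by
      intro a b ha hb hab; rw [hab, hb] at ha; exact MStep.noConfusion ha
    refine ⟨?_, hUD _ _ he.1 hg.2.1, (hUD _ _ hg.1 he.2.1).symm, ?_⟩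
    · -- e.1 ≠ g.1
      intro h11
      -- same left endpoint, different right endpoints (else e = g)
      have hne2 : e.2 ≠ g.2 := by
        intro h22; exact hne (Prod.ext h11 h22)
      rcases lt_or_gt_of_ne hne2 with hlt | hlt
      · -- e.2 < g.2 : consider k = e.2 + 1 ∈ (g.1, g.2]
        have hlt' : ((e.2 : ℕ) + 1) ≤ (g.2 : ℕ) := hlt
        have hk : ((e.2 : ℕ) + 1) < n := lt_of_le_of_lt hlt' g.2.isLt
        have := hg.2.2.2.2 ⟨(e.2 : ℕ) + 1, hk⟩
          (by rw [← h11]; exact lt_of_lt_of_le he.2.2.1 (by simp [Fin.le_def]))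
          (by simpa [Fin.le_def] using hlt')
        rw [← h11, ← he.2.2.2.1] at this
        exact lt_irrefl _ this
      · have hlt' : ((g.2 : ℕ) + 1) ≤ (e.2 : ℕ) := hlt
        have hk : ((g.2 : ℕ) + 1) < n := lt_of_le_of_lt hlt' e.2.isLt
        have := he.2.2.2.2 ⟨(g.2 : ℕ) + 1, hk⟩
          (by rw [h11]; exact lt_of_lt_of_le hg.2.2.1 (by simp [Fin.le_def]))
          (by simpa [Fin.le_def] using hlt')
        rw [h11, ← hg.2.2.2.1] at this
        exact lt_irrefl _ this
    · -- e.2 ≠ g.2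
      intro h22
      apply hne
      have h1 : (e.1, e.2) ∈ erec f := by rwa [Prod.mk.eta]
      have h2 : (g.1, e.2) ∈ erec f := by rw [h22, Prod.mk.eta]; exact hg0
      exact Prod.ext (erec_right_unique h1 h2) h22

lemma erec_noncrossing (f : Fin n → MStep) : IsNoncrossing (erec f) := by
  have key : ∀ e ∈ erec f, ∀ g ∈ erec f,
      ¬ (e.1 < g.1 ∧ g.1 < e.2 ∧ e.2 < g.2) := by
    intro e he g hg ⟨h1, h2, h3⟩
    rw [mem_erec] at he hg
    -- ht g.1 > ht e.1 since g.1 ∈ (e.1, e.2]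
    have hA : ht f (e.1 : ℕ) < ht f (g.1 : ℕ) := he.2.2.2.2 g.1 h1 h2.le
    -- e.2+1 ∈ (g.1, g.2] so ht (e.2+1) > ht g.1
    have hk : ((e.2 : ℕ) + 1) < n := lt_of_le_of_lt h3 g.2.isLt
    have hB := hg.2.2.2.2 ⟨(e.2 : ℕ) + 1, hk⟩
      (by exact lt_trans h2 (by simp [Fin.lt_def]))
      (by simpa [Fin.le_def] using (show (e.2:ℕ)+1 ≤ (g.2:ℕ) from h3))
    rw [← he.2.2.2.1] at hB
    have : ht f (g.1 : ℕ) < ht f (g.1 : ℕ) := lt_trans hB hA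
    exact lt_irrefl _ this
  intro e he g hg hc
  rcases hc with h | h
  · exact key e he g hg h
  · exact key g hg e he h

/-- every `D` step has a partner -/
lemma exists_partner_D {f : Fin n → MStep} (hnn : ∀ t, 0 ≤ ht f t)
    (j : Fin n) (hj : f j = .D) : ∃ i : Fin n, (i, j) ∈ erec f := by
  set T : Finset ℕ := (Finset.range ((j : ℕ) + 1)).filter
    (fun t => ht f t ≤ ht f ((j : ℕ) + 1)) with hT
  have h0T : 0 ∈ T := by
    simp only [hT, Finset.mem_filter, Finset.mem_range]
    exact ⟨Nat.succ_pos _, by rw [ht_zero]; exact hnn _⟩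
  have hTne : T.Nonempty := ⟨0, h0T⟩
  set i₀ := T.max' hTne with hi₀
  have hi₀T : i₀ ∈ T := T.max'_mem hTne
  have hi₀le : i₀ ≤ (j : ℕ) := by
    have := Finset.mem_range.mp (Finset.mem_filter.mp hi₀T).1
    omega
  have hi₀ht : ht f i₀ ≤ ht f ((j : ℕ) + 1) := (Finset.mem_filter.mp hi₀T).2
  have hjsucc : ht f ((j : ℕ) + 1) = ht f (j : ℕ) + (f j).h := by
    have := ht_succ f (j : ℕ) j.isLt
    simpa using this
  have hjD : ht f ((j : ℕ) + 1) = ht f (j : ℕ) - 1 := by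
    rw [hjsucc, hj]; simp [MStep.h]; ring
  have hjgt : ht f ((j : ℕ) + 1) < ht f (j : ℕ) := by omega
  have hjnotT : (j : ℕ) ∉ T := by
    simp only [hT, Finset.mem_filter, Finset.mem_range]
    push_neg
    intro _
    omega
  have hi₀lt : i₀ < (j : ℕ) := lt_of_le_of_ne hi₀le (fun h => hjnotT (h ▸ hi₀T))
  -- maximality
  have hmax : ∀ t : ℕ, i₀ < t → t ≤ (j : ℕ) → ht f ((j : ℕ) + 1) < ht f t := by
    intro t h1 h2
    by_contra hle
    push_neg at hle
    have : t ∈ T := by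
      simp only [hT, Finset.mem_filter, Finset.mem_range]
      exact ⟨by omega, hle⟩
    exact absurd (T.le_max' t this) (by omega)
  have hi₀n : i₀ < n := lt_trans hi₀lt j.isLt
  have hstep : ht f (i₀ + 1) = ht f i₀ + (f ⟨i₀, hi₀n⟩).h := ht_succ f i₀ hi₀n
  have h1 : ht f ((j : ℕ) + 1) < ht f (i₀ + 1) := hmax (i₀ + 1) (by omega) (by omega)
  have heq : ht f i₀ = ht f ((j : ℕ) + 1) := by
    have := h_le_one (f ⟨i₀, hi₀n⟩)
    omega
  have hU : f ⟨i₀, hi₀n⟩ = .U := by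
    rw [← h_pos_iff]
    omega
  refine ⟨⟨i₀, hi₀n⟩, ?_⟩
  rw [mem_erec]
  refine ⟨hU, hj, hi₀lt, heq, ?_⟩
  intro k hk1 hk2
  have := hmax (k : ℕ) hk1 hk2
  show ht f i₀ < ht f (k : ℕ)
  omega

/-- every `U` step has a partner -/
lemma exists_partner_U {f : Fin n → MStep} (hnn : ∀ t, 0 ≤ ht f t)
    (htot : ht f n = 0) (i : Fin n) (hi : f i = .U) : ∃ j : Fin n, (i, j) ∈ erec f := by
  set T : Finset ℕ := (Finset.range (n + 1)).filter
    (fun t => (i : ℕ) < t ∧ ht f t ≤ ht f (i : ℕ)) with hT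
  have hnT : n ∈ T := by
    simp only [hT, Finset.mem_filter, Finset.mem_range]
    exact ⟨by omega, i.isLt, by rw [htot]; exact hnn _⟩
  have hTne : T.Nonempty := ⟨n, hnT⟩
  set t₀ := T.min' hTne with ht₀
  have ht₀T : t₀ ∈ T := T.min'_mem hTne
  obtain ⟨ht₀r, ht₀i, ht₀ht⟩ : t₀ ∈ Finset.range (n+1) ∧ (i:ℕ) < t₀ ∧ ht f t₀ ≤ ht f (i:ℕ) := by
    have := Finset.mem_filter.mp ht₀T
    exact ⟨this.1, this.2.1, this.2.2⟩
  have ht₀n : t₀ ≤ n := by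
    have := Finset.mem_range.mp ht₀r
    omega
  have hmin : ∀ t : ℕ, (i : ℕ) < t → t < t₀ → ht f (i : ℕ) < ht f t := by
    intro t h1 h2
    by_contra hle
    push_neg at hle
    have : t ∈ T := by
      simp only [hT, Finset.mem_filter, Finset.mem_range]
      exact ⟨by omega, h1, hle⟩
    exact absurd (T.min'_le t this) (by omega)
  have hisucc : ht f ((i : ℕ) + 1) = ht f (i : ℕ) + 1 := by
    rw [ht_succ f (i : ℕ) i.isLt]
    have : f ⟨(i : ℕ), i.isLt⟩ = .U := by
      have : (⟨(i : ℕ), i.isLt⟩ : Fin n) = i := by ext; rfl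
      rw [this, hi]
    rw [this]; rfl
  have ht₀ne : t₀ ≠ (i : ℕ) + 1 := by
    intro h
    rw [h, hisucc] at ht₀ht
    omega
  have ht₀ge : (i : ℕ) + 2 ≤ t₀ := by omega
  set j₀ := t₀ - 1 with hj₀
  have hj₀lt : (i : ℕ) < j₀ := by omega
  have hj₀n : j₀ < n := by omega
  have hj₀gt : ht f (i : ℕ) < ht f j₀ := hmin j₀ (by omega) (by omega)
  have hstep : ht f t₀ = ht f j₀ + (f ⟨j₀, hj₀n⟩).h := by
    have := ht_succ f j₀ hj₀n
    rw [show j₀ + 1 = t₀ by omega] at this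
    exact this
  have heq : ht f t₀ = ht f (i : ℕ) := by
    have := neg_one_le_h (f ⟨j₀, hj₀n⟩)
    omega
  have hD : f ⟨j₀, hj₀n⟩ = .D := by
    rw [← h_neg_iff]
    omega
  refine ⟨⟨j₀, hj₀n⟩, ?_⟩
  rw [mem_erec]
  refine ⟨hi, hD, hj₀lt, ?_, ?_⟩
  · show ht f (i : ℕ) = ht f (j₀ + 1)
    rw [show j₀ + 1 = t₀ by omega, heq]
  · intro k hk1 hk2
    exact hmin (k : ℕ) hk1 (by
      have : (k : ℕ) ≤ j₀ := hk2
      omega)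

section PathSide

variable {f : Fin n → MStep}

lemma mem_image_fst_erec_iff (hnn : ∀ t, 0 ≤ ht f t) (htot : ht f n = 0) (k : Fin n) :
    k ∈ (erec f).image Prod.fst ↔ f k = .U := by
  constructor
  · rintro hk
    obtain ⟨e, he, he1⟩ := Finset.mem_image.mp hk
    rw [mem_erec] at he
    rw [← he1]; exact he.1
  · intro hk
    obtain ⟨j, hj⟩ := exists_partner_U hnn htot k hk
    exact Finset.mem_image.mpr ⟨(k, j), hj, rfl⟩

lemma mem_image_snd_erec_iff (hnn : ∀ t, 0 ≤ ht f t) (k : Fin n) :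
    k ∈ (erec f).image Prod.snd ↔ f k = .D := by
  constructor
  · rintro hk
    obtain ⟨e, he, he2⟩ := Finset.mem_image.mp hk
    rw [mem_erec] at he
    rw [← he2]; exact he.2.1
  · intro hk
    obtain ⟨i, hi⟩ := exists_partner_D hnn k hk
    exact Finset.mem_image.mpr ⟨(i, k), hi, rfl⟩

lemma stepOf_crec_erec (hnn : ∀ t, 0 ≤ ht f t) (htot : ht f n = 0) :
    stepOf (crec f) (erec f) = f := by
  funext k
  unfold stepOf
  rcases hU : f k with _ | _ | _ | _
  · rw [if_pos ((mem_image_fst_erec_iff hnn htot k).mpr hU)]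
  · rw [if_neg, if_pos ((mem_image_snd_erec_iff hnn k).mpr hU)]
    rw [mem_image_fst_erec_iff hnn htot k, hU]
    exact fun h => MStep.noConfusion h
  · rw [if_neg, if_neg, if_pos]
    · show crec f k = true
      unfold crec; rw [hU]
    · rw [mem_image_snd_erec_iff hnn k, hU]; exact fun h => MStep.noConfusion h
    · rw [mem_image_fst_erec_iff hnn htot k, hU]; exact fun h => MStep.noConfusion h
  · rw [if_neg, if_neg, if_neg]
    · show ¬ crec f k = true
      unfold crec; rw [hU]; exact fun h => Bool.noConfusion h
    · rw [mem_image_snd_erec_iff hnn k, hU]; exact fun h => MStep.noConfusion h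
    · rw [mem_image_fst_erec_iff hnn htot k, hU]; exact fun h => MStep.noConfusion h

lemma card_erec (hnn : ∀ t, 0 ≤ ht f t) :
    (erec f).card = (Finset.univ.filter (fun k => f k = MStep.D)).card := by
  apply Finset.card_bij (fun e _ => e.2)
  · intro e he
    rw [mem_erec] at he
    simp [he.2.1]
  · intro e he g hg h2
    have he' : (e.1, e.2) ∈ erec f := by rwa [Prod.mk.eta]
    have hg' : (g.1, e.2) ∈ erec f := by rw [h2, Prod.mk.eta]; exact hg
    exact Prod.ext (erec_right_unique he' hg') h2
  · intro j hj
    simp only [Finset.mem_filter, Finset.mem_univ, true_and] at hj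
    obtain ⟨i, hi⟩ := exists_partner_D hnn j hj
    exact ⟨(i, j), hi, rfl⟩

lemma ht_top (f : Fin n → MStep) : ht f n = ∑ k, (f k).h := by
  unfold ht
  congr 1
  ext k
  simp [k.isLt]

lemma count_U_eq_count_D (htot : ht f n = 0) :
    (Finset.univ.filter (fun k => f k = MStep.U)).card
      = (Finset.univ.filter (fun k => f k = MStep.D)).card := by
  have key : (0 : ℤ) = ((Finset.univ.filter (fun k => f k = MStep.U)).card : ℤ)
      - ((Finset.univ.filter (fun k => f k = MStep.D)).card : ℤ) := by
    rw [← htot, ht_top]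
    have : ∀ k : Fin n, (f k).h
        = (if f k = MStep.U then (1:ℤ) else 0) - (if f k = MStep.D then (1:ℤ) else 0) := by
      intro k; rcases f k with _|_|_|_ <;> simp [MStep.h]
    rw [Finset.sum_congr rfl (fun k _ => this k), Finset.sum_sub_distrib,
      Finset.sum_boole, Finset.sum_boole]
  omega

lemma crec_false_iff (k : Fin n) :
    crec f k = false ↔ (f k = MStep.U ∨ f k = MStep.Lg) := by
  unfold crec
  rcases f k with _|_|_|_ <;> simp

lemma card_crec_false :
    (Finset.univ.filter (fun k => crec f k = false)).card
      = (Finset.univ.filter (fun k => f k = MStep.U)).card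
        + (Finset.univ.filter (fun k => f k = MStep.Lg)).card := by
  rw [← Finset.card_union_of_disjoint, ← Finset.filter_or]
  · congr 1
    ext k
    simp [crec_false_iff]
  · rw [Finset.disjoint_filter]
    intro k _ h1 h2
    rw [h1] at h2
    exact MStep.noConfusion h2

end PathSide

section PairSide

variable {c : Fin n → Bool} {E : Finset (Fin n × Fin n)}

lemma stepOf_eq_U_iff (k : Fin n) :
    stepOf c E k = .U ↔ k ∈ E.image Prod.fst := by
  unfold stepOf
  by_cases h1 : k ∈ E.image Prod.fst
  · simp [h1]
  · by_cases h2 : k ∈ E.image Prod.snd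
    · simp [h1, h2]
    · by_cases h3 : c k <;> simp [h1, h2, h3]

lemma stepOf_eq_D_iff (hC : IsContraction c E) (k : Fin n) :
    stepOf c E k = .D ↔ k ∈ E.image Prod.snd := by
  unfold stepOf
  by_cases h1 : k ∈ E.image Prod.fst
  · have h2 : k ∉ E.image Prod.snd := fun h2 => not_mem_both hC k ⟨h1, h2⟩
    simp [h1, h2]
  · by_cases h2 : k ∈ E.image Prod.snd
    · simp [h1, h2]
    · by_cases h3 : c k <;> simp [h1, h2, h3]

lemma crec_stepOf (hC : IsContraction c E) : crec (stepOf c E) = c := by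
  funext k
  unfold stepOf crec
  by_cases h1 : k ∈ E.image Prod.fst
  · obtain ⟨e, he, he1⟩ := Finset.mem_image.mp h1
    have := (hC.1 e he).2.1
    rw [he1] at this
    simp [h1, this]
  · by_cases h2 : k ∈ E.image Prod.snd
    · obtain ⟨e, he, he2⟩ := Finset.mem_image.mp h2
      have := (hC.1 e he).2.2
      rw [he2] at this
      simp [h1, h2, this]
    · by_cases h3 : c k <;> simp [h1, h2, h3]

/-- edges spanning the gap at a left endpoint must span past the right endpoint -/
lemma span_left_strong (hC : IsContraction c E) (hN : IsNoncrossing E)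
    {e a : Fin n × Fin n} (he : e ∈ E) (ha : a ∈ E)
    (h1 : (a.1 : ℕ) < (e.1 : ℕ)) (h2 : (e.1 : ℕ) ≤ (a.2 : ℕ)) :
    (e.2 : ℕ) < (a.2 : ℕ) := by
  have hne : a ≠ e := by
    intro h; rw [h] at h1; omega
  have hd := hC.2 a ha e he hne
  have h2' : (e.1 : ℕ) < (a.2 : ℕ) := by
    rcases Nat.lt_or_ge (e.1 : ℕ) (a.2 : ℕ) with h | h
    · exact h
    · exfalso
      have : (a.2 : ℕ) = (e.1 : ℕ) := by omega
      exact hd.2.2.1 (Fin.ext this)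
  have hnc := hN a ha e he
  have : ¬ ((a.1 : ℕ) < (e.1 : ℕ) ∧ (e.1 : ℕ) < (a.2 : ℕ) ∧ (a.2 : ℕ) < (e.2 : ℕ)) := by
    intro hx
    exact hnc (Or.inl ⟨hx.1, hx.2.1, hx.2.2⟩)
  have ha2ne : (a.2 : ℕ) ≠ (e.2 : ℕ) := fun h => hd.2.2.2 (Fin.ext h)
  omega

/-- edges spanning the gap after the right endpoint must start before the left endpoint -/
lemma span_right_strong (hC : IsContraction c E) (hN : IsNoncrossing E)
    {e a : Fin n × Fin n} (he : e ∈ E) (ha : a ∈ E)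
    (h1 : (a.1 : ℕ) < (e.2 : ℕ) + 1) (h2 : (e.2 : ℕ) + 1 ≤ (a.2 : ℕ)) :
    (a.1 : ℕ) < (e.1 : ℕ) := by
  have hne : a ≠ e := by
    intro h; rw [h] at h2; omega
  have hd := hC.2 a ha e he hne
  have hee : (e.1 : ℕ) < (e.2 : ℕ) := (hC.1 e he).1
  have ha1ne2 : (a.1 : ℕ) ≠ (e.2 : ℕ) := fun h => hd.2.1 (Fin.ext h)
  have ha1ne1 : (a.1 : ℕ) ≠ (e.1 : ℕ) := fun h => hd.1 (Fin.ext h)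
  have hnc := hN e he a ha
  have : ¬ ((e.1 : ℕ) < (a.1 : ℕ) ∧ (a.1 : ℕ) < (e.2 : ℕ) ∧ (e.2 : ℕ) < (a.2 : ℕ)) := by
    intro hx
    exact hnc (Or.inl ⟨hx.1, hx.2.1, hx.2.2⟩)
  omega

lemma span_eq_at_edge (hC : IsContraction c E) (hN : IsNoncrossing E)
    {e : Fin n × Fin n} (he : e ∈ E) :
    span E (e.1 : ℕ) = span E ((e.2 : ℕ) + 1) := by
  ext a
  simp only [span, Finset.mem_filter]
  constructor
  · rintro ⟨ha, h1, h2⟩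
    have h3 := span_left_strong hC hN he ha h1 h2
    have hee : (e.1 : ℕ) < (e.2 : ℕ) := (hC.1 e he).1
    exact ⟨ha, by omega, by omega⟩
  · rintro ⟨ha, h1, h2⟩
    have h3 := span_right_strong hC hN he ha h1 h2
    have hee : (e.1 : ℕ) < (e.2 : ℕ) := (hC.1 e he).1
    exact ⟨ha, h3, by omega⟩

lemma span_ssubset (hC : IsContraction c E) (hN : IsNoncrossing E)
    {e : Fin n × Fin n} (he : e ∈ E) {k : ℕ}
    (hk1 : (e.1 : ℕ) < k) (hk2 : k ≤ (e.2 : ℕ)) :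
    span E (e.1 : ℕ) ⊂ span E k := by
  constructor
  · intro a ha
    simp only [span, Finset.mem_filter] at ha ⊢
    obtain ⟨haE, h1, h2⟩ := ha
    have h3 := span_left_strong hC hN he haE h1 h2
    exact ⟨haE, by omega, by omega⟩
  · intro hsub
    have hek : e ∈ span E k := by
      simp only [span, Finset.mem_filter]
      exact ⟨he, hk1, hk2⟩
    have := hsub hek
    simp only [span, Finset.mem_filter] at this
    omega

lemma erec_stepOf (hC : IsContraction c E) (hN : IsNoncrossing E) :
    erec (stepOf c E) = E := by
  have hsub : E ⊆ erec (stepOf c E) := by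
    intro e he
    rw [mem_erec]
    refine ⟨?_, ?_, (hC.1 e he).1, ?_, ?_⟩
    · rw [stepOf_eq_U_iff]
      exact Finset.mem_image.mpr ⟨e, he, rfl⟩
    · rw [stepOf_eq_D_iff hC]
      exact Finset.mem_image.mpr ⟨e, he, rfl⟩
    · rw [ht_stepOf hC, ht_stepOf hC, span_eq_at_edge hC hN he]
    · intro k hk1 hk2
      rw [ht_stepOf hC, ht_stepOf hC]
      exact_mod_cast Finset.card_lt_card (span_ssubset hC hN he hk1 hk2)
  apply Finset.Subset.antisymm _ hsub
  intro p hp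
  have hpD : stepOf c E p.2 = .D := (mem_erec.mp hp).2.1
  rw [stepOf_eq_D_iff hC] at hpD
  obtain ⟨a, ha, ha2⟩ := Finset.mem_image.mp hpD
  have haerec : a ∈ erec (stepOf c E) := hsub ha
  have hp' : (p.1, p.2) ∈ erec (stepOf c E) := by rwa [Prod.mk.eta]
  have ha' : (a.1, p.2) ∈ erec (stepOf c E) := by rw [← ha2, Prod.mk.eta]; exact haerec
  have h1 := erec_right_unique hp' ha'
  have : p = a := Prod.ext h1 ha2.symm
  rwa [this]

lemma card_stepOf_U (hC : IsContraction c E) :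
    (Finset.univ.filter (fun k => stepOf c E k = MStep.U)).card = E.card := by
  have : Finset.univ.filter (fun k => stepOf c E k = MStep.U) = E.image Prod.fst := by
    ext k
    simp [stepOf_eq_U_iff]
  rw [this]
  exact Finset.card_image_of_injOn (fst_injOn hC)

lemma stepOf_eq_Lg_iff (k : Fin n) :
    stepOf c E k = .Lg ↔ (k ∉ E.image Prod.fst ∧ k ∉ E.image Prod.snd ∧ c k = false) := by
  unfold stepOf
  by_cases h1 : k ∈ E.image Prod.fst
  · simp [h1]
  · by_cases h2 : k ∈ E.image Prod.snd
    · simp [h1, h2]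
    · by_cases h3 : c k <;> simp [h1, h2, h3]

lemma filter_false_eq (hC : IsContraction c E) :
    Finset.univ.filter (fun k => c k = false)
      = Finset.univ.filter (fun k => stepOf c E k = MStep.U)
        ∪ Finset.univ.filter (fun k => stepOf c E k = MStep.Lg) := by
  ext k
  simp only [Finset.mem_filter, Finset.mem_univ, true_and, Finset.mem_union,
    stepOf_eq_U_iff, stepOf_eq_Lg_iff]
  constructor
  · intro hk
    by_cases h1 : k ∈ E.image Prod.fst
    · exact Or.inl h1
    · refine Or.inr ⟨h1, ?_, hk⟩
      intro h2
      obtain ⟨a, ha, ha2⟩ := Finset.mem_image.mp h2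
      have := (hC.1 a ha).2.2
      rw [ha2, hk] at this
      exact Bool.noConfusion this
  · rintro (h1 | h)
    · obtain ⟨a, ha, ha1⟩ := Finset.mem_image.mp h1
      have := (hC.1 a ha).2.1
      rwa [ha1] at this
    · exact h.2.2

lemma card_false_eq (hC : IsContraction c E) :
    (Finset.univ.filter (fun k => c k = false)).card
      = E.card + (Finset.univ.filter (fun k => stepOf c E k = MStep.Lg)).card := by
  rw [filter_false_eq hC, Finset.card_union_of_disjoint, card_stepOf_U hC]
  rw [Finset.disjoint_filter]
  intro k _ h1 h2
  rw [h1] at h2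
  exact MStep.noConfusion h2

end PairSide

section Main

variable (n m d : ℕ)

/-- the pair subtype from `pairCountAA` -/
def PairT := {p : (Fin n → Bool) × Finset (Fin n × Fin n) //
    (Finset.univ.filter (fun k => p.1 k = false)).card = d ∧
    IsContraction p.1 p.2 ∧ IsNoncrossing p.2 ∧ p.2.card = m}

/-- the function version of the Motzkin path subtype -/
def FnT := {f : Fin n → MStep //
    (∀ t, 0 ≤ ht f t) ∧ ht f n = 0 ∧
    (Finset.univ.filter (fun k => f k = MStep.U)).card = m ∧
    (Finset.univ.filter (fun k => f k = MStep.Lg)).card = d - m}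

variable {n m d}

def pairEquivFn (hmd : m ≤ d) : PairT n m d ≃ FnT n m d where
  toFun p := ⟨stepOf p.1.1 p.1.2, by
    have hd := p.2.1
    have hC := p.2.2.1
    have hN := p.2.2.2.1
    have hm := p.2.2.2.2
    refine ⟨?_, ?_, ?_, ?_⟩
    · intro t
      rw [ht_stepOf hC]
      exact_mod_cast Nat.zero_le _
    · rw [ht_stepOf hC]
      have : span p.1.2 n = ∅ := by
        apply Finset.eq_empty_of_forall_notMem
        intro a ha
        simp only [span, Finset.mem_filter] at ha
        exact absurd a.2.isLt (by omega)
      rw [this]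
      simp
    · rw [card_stepOf_U hC, hm]
    · have := card_false_eq hC
      rw [hd, hm] at this
      omega⟩
  invFun f := ⟨(crec f.1, erec f.1), by
    have hnn := f.2.1
    have htot := f.2.2.1
    have hU := f.2.2.2.1
    have hLg := f.2.2.2.2
    refine ⟨?_, erec_contraction f.1, erec_noncrossing f.1, ?_⟩
    · rw [card_crec_false, hU, hLg]
      omega
    · rw [card_erec hnn, ← count_U_eq_count_D htot, hU]⟩
  left_inv p := by
    apply Subtype.ext
    show (crec (stepOf p.1.1 p.1.2), erec (stepOf p.1.1 p.1.2)) = p.1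
    have hC := p.2.2.1
    have hN := p.2.2.2.1
    rw [crec_stepOf hC, erec_stepOf hC hN]
  right_inv f := by
    apply Subtype.ext
    show stepOf (crec f.1) (erec f.1) = f.1
    exact stepOf_crec_erec f.2.1 f.2.2.1

end Main

section Lists

lemma sum_take_ht (f : Fin n → MStep) (t : ℕ) :
    (((List.ofFn f).take t).map MStep.h).sum = ht f t := by
  rw [List.map_take, List.map_ofFn, List.sum_take_ofFn]
  rfl

lemma motzkin_ofFn (f : Fin n → MStep) :
    IsMotzkin2 (List.ofFn f) ↔ ((∀ t, 0 ≤ ht f t) ∧ ht f n = 0) := by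
  constructor
  · rintro ⟨h1, h2⟩
    refine ⟨fun t => ?_, ?_⟩
    · have := h1 ((List.ofFn f).take t) (List.take_prefix t _)
      rwa [sum_take_ht] at this
    · rw [← sum_take_ht f n, List.take_of_length_le (by simp)]
      exact h2
  · rintro ⟨h1, h2⟩
    refine ⟨fun q hq => ?_, ?_⟩
    · rw [List.prefix_iff_eq_take.mp hq, sum_take_ht]
      exact h1 _
    · rw [show (List.ofFn f) = (List.ofFn f).take n by simp, sum_take_ht]
      exact h2

lemma count_ofFn : ∀ {N : ℕ} (f : Fin N → MStep) (a : MStep),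
    (List.ofFn f).count a = (Finset.univ.filter (fun i => f i = a)).card
  | 0, f, a => by simp
  | (k+1), f, a => by
    rw [List.ofFn_succ, List.count_cons, count_ofFn (fun i => f i.succ) a,
      Finset.card_filter, Finset.card_filter, Fin.sum_univ_succ]
    simp only [beq_iff_eq]
    exact add_comm _ _

lemma ofFn_get_cast {N : ℕ} (l : List MStep) (h : l.length = N) :
    List.ofFn (fun i : Fin N => l.get (Fin.cast h.symm i)) = l := by
  subst h
  simp [List.ofFn_get]

variable {m d : ℕ}

def fnEquivList : FnT n m d ≃ {p : List MStep // p.length = n ∧ IsMotzkin2 p ∧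
    p.count MStep.U = m ∧ p.count MStep.Lg = d - m} where
  toFun f := ⟨List.ofFn f.1, by
    refine ⟨by simp, (motzkin_ofFn f.1).mpr ⟨f.2.1, f.2.2.1⟩, ?_, ?_⟩
    · rw [count_ofFn, f.2.2.2.1]
    · rw [count_ofFn, f.2.2.2.2]⟩
  invFun p := ⟨fun i => p.1.get (Fin.cast p.2.1.symm i), by
    have hofn := ofFn_get_cast p.1 p.2.1
    have h2 := p.2.2.1
    have h3 := p.2.2.2.1
    have h4 := p.2.2.2.2
    rw [← hofn] at h2 h3 h4
    rw [motzkin_ofFn] at h2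
    rw [count_ofFn] at h3 h4
    exact ⟨h2.1, h2.2, h3, h4⟩⟩
  left_inv f := by
    apply Subtype.ext
    funext i
    show (List.ofFn f.1).get _ = f.1 i
    simp
  right_inv p := by
    apply Subtype.ext
    exact ofFn_get_cast p.1 p.2.1

end Lists

end Stmt16

theorem stmt16 (n m d : ℕ) (hmd : m ≤ d) :
    pairCountAA n m d
      = Nat.card {p : List MStep // p.length = n ∧ IsMotzkin2 p ∧
          p.count MStep.U = m ∧ p.count MStep.Lg = d - m} := by
  apply Nat.card_congr
  exact (Stmt16.pairEquivFn hmd).trans Stmt16.fnEquivList
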